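/- Local Lipschitz constant validity of the local adjustment rule: let φ : [a,b] → ℝ be C¹, let a = a₀ < ⋯ < a_n = b, mᵢ = |φ(a_{i+1}) − φ(aᵢ)|/(a_{i+1} − aᵢ), M = maxᵢ mᵢ, dᵢ = a_{i+1} − aᵢ, D = maxᵢ dᵢ, and lᵢ = r·max{m_{i−1}, mᵢ, m_{i+1}, M·dᵢ/D} with r > 1. Then as the partition is refined so that dᵢ → 0 with the neighbourhood points dense in a neighbourhood of [aᵢ, a_{i+1}], lᵢ converges to r·sup_{x∈[aᵢ,a_{i+1}]}|φ'(x)|, which strictly exceeds the best local Lipschitz constant kᵢ^best = sup_{x∈[aᵢ,a_{i+1}]}|φ'(x)| whenever it is positive. -/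

import Mathlib

open Filter

/-- Slope of `φ` over the `j`-th subinterval of the partition `P`. -/
noncomputable def slopeM (φ : ℝ → ℝ) {n : ℕ} (P : Fin (n + 2) → ℝ)
    (j : Fin (n + 1)) : ℝ :=
  |φ (P j.succ) - φ (P j.castSucc)| / (P j.succ - P j.castSucc)

/-- Length of the `j`-th subinterval. -/
noncomputable def dLen {n : ℕ} (P : Fin (n + 2) → ℝ) (j : Fin (n + 1)) : ℝ :=
  P j.succ - P j.castSucc

/-- Maximal observed slope `M`. -/
noncomputable def Mmax (φ : ℝ → ℝ) {n : ℕ} (P : Fin (n + 2) → ℝ) : ℝ :=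
  Finset.univ.sup' Finset.univ_nonempty (slopeM φ P)

/-- Maximal subinterval length `D`. -/
noncomputable def Dmax {n : ℕ} (P : Fin (n + 2) → ℝ) : ℝ :=
  Finset.univ.sup' Finset.univ_nonempty (dLen P)

/-- The local-adjustment estimate
`lᵢ = r · max{m_{i−1}, mᵢ, m_{i+1}, M·dᵢ/D}` for an interior interval. -/
noncomputable def llocal (φ : ℝ → ℝ) (r : ℝ) {n : ℕ} (P : Fin (n + 2) → ℝ)
    (j : ℕ) (hj0 : 0 < j) (hjn : j < n) : ℝ :=
  r * max (max (slopeM φ P ⟨j - 1, by omega⟩) (slopeM φ P ⟨j, by omega⟩))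
      (max (slopeM φ P ⟨j + 1, by omega⟩) (Mmax φ P * dLen P ⟨j, by omega⟩ / Dmax P))

/-- In the fine-partition limit, the local adjustment estimate `lᵢ` converges
to `r · sup_{x∈[aᵢ,a_{i+1}]}|φ'(x)|`, which strictly exceeds the best local
Lipschitz constant `sup_{x∈[aᵢ,a_{i+1}]}|φ'(x)|` whenever the latter is
positive. -/

lemma mvt_abs (φ φ' : ℝ → ℝ) (a b : ℝ)
    (hderiv : ∀ x ∈ Set.Icc a b, HasDerivWithinAt φ (φ' x) (Set.Icc a b) x)
    {x y : ℝ} (hxy : x < y) (hx : x ∈ Set.Icc a b) (hy : y ∈ Set.Icc a b) :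
    ∃ c ∈ Set.Icc x y, |φ y - φ x| / (y - x) = |φ' c| := by
  have hsub : Set.Icc x y ⊆ Set.Icc a b := Set.Icc_subset_Icc hx.1 hy.2
  have hcφ : ContinuousOn φ (Set.Icc x y) := fun z hz =>
    ((hderiv z (hsub hz)).continuousWithinAt).mono hsub
  have hIoo : ∀ z ∈ Set.Ioo x y, HasDerivAt φ (φ' z) z := by
    intro z hz
    have hzab : z ∈ Set.Ioo a b := ⟨lt_of_le_of_lt hx.1 hz.1, lt_of_lt_of_le hz.2 hy.2⟩
    exact (hderiv z (Set.Ioo_subset_Icc_self hzab)).hasDerivAt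
      (Icc_mem_nhds hzab.1 hzab.2)
  obtain ⟨c, hc, hceq⟩ := exists_hasDerivAt_eq_slope φ φ' hxy hcφ hIoo
  refine ⟨c, Set.Ioo_subset_Icc_self hc, ?_⟩
  rw [show |φ y - φ x| / (y - x) = |(φ y - φ x) / (y - x)| by
    rw [abs_div, abs_of_pos (sub_pos.2 hxy)], ← hceq]

lemma tendsto_absderiv (φ' : ℝ → ℝ) (a b : ℝ)
    (hcont : ContinuousOn φ' (Set.Icc a b)) (c : ℕ → ℝ)
    (hc : ∀ k, c k ∈ Set.Icc a b) (xbar : ℝ) (hxbar : xbar ∈ Set.Icc a b)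
    (hct : Tendsto c atTop (nhds xbar)) :
    Tendsto (fun k => |φ' (c k)|) atTop (nhds |φ' xbar|) := by
  have h1 : Tendsto c atTop (nhdsWithin xbar (Set.Icc a b)) :=
    tendsto_nhdsWithin_of_tendsto_nhds_of_eventually_within _ hct
      (Eventually.of_forall hc)
  exact (continuous_abs.tendsto _).comp ((hcont xbar hxbar).tendsto.comp h1)

lemma slope_tendsto (φ φ' : ℝ → ℝ) (a b : ℝ)
    (hderiv : ∀ x ∈ Set.Icc a b, HasDerivWithinAt φ (φ' x) (Set.Icc a b) x)
    (hcont : ContinuousOn φ' (Set.Icc a b))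
    (x y : ℕ → ℝ) (hxy : ∀ k, x k < y k)
    (hx : ∀ k, x k ∈ Set.Icc a b) (hy : ∀ k, y k ∈ Set.Icc a b)
    (xbar : ℝ) (hxbar : xbar ∈ Set.Icc a b)
    (hxt : Tendsto x atTop (nhds xbar)) (hyt : Tendsto y atTop (nhds xbar)) :
    Tendsto (fun k => |φ (y k) - φ (x k)| / (y k - x k)) atTop (nhds |φ' xbar|) := by
  choose c hc1 hc2 using fun k => mvt_abs φ φ' a b hderiv (hxy k) (hx k) (hy k)
  have hct : Tendsto c atTop (nhds xbar) :=
    tendsto_of_tendsto_of_tendsto_of_le_of_le hxt hyt (fun k => (hc1 k).1)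
      (fun k => (hc1 k).2)
  have hcab : ∀ k, c k ∈ Set.Icc a b := fun k =>
    Set.Icc_subset_Icc (hx k).1 (hy k).2 (hc1 k)
  exact (tendsto_absderiv φ' a b hcont c hcab xbar hxbar hct).congr
    fun k => (hc2 k).symm

lemma ssup_tendsto (φ' : ℝ → ℝ) (a b : ℝ)
    (hcont : ContinuousOn φ' (Set.Icc a b))
    (x y : ℕ → ℝ) (hxy : ∀ k, x k < y k)
    (hx : ∀ k, x k ∈ Set.Icc a b) (hy : ∀ k, y k ∈ Set.Icc a b)
    (xbar : ℝ) (hxbar : xbar ∈ Set.Icc a b)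
    (hxt : Tendsto x atTop (nhds xbar)) (hyt : Tendsto y atTop (nhds xbar)) :
    Tendsto (fun k => sSup ((fun z => |φ' z|) '' Set.Icc (x k) (y k))) atTop
      (nhds |φ' xbar|) := by
  have habs : ContinuousOn (fun z => |φ' z|) (Set.Icc a b) := hcont.abs
  have key : ∀ k, ∃ c ∈ Set.Icc (x k) (y k),
      sSup ((fun z => |φ' z|) '' Set.Icc (x k) (y k)) = |φ' c| := fun k =>
    isCompact_Icc.exists_sSup_image_eq (Set.nonempty_Icc.2 (hxy k).le)
      (habs.mono (Set.Icc_subset_Icc (hx k).1 (hy k).2))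
  choose c hc1 hc2 using key
  have hct : Tendsto c atTop (nhds xbar) :=
    tendsto_of_tendsto_of_tendsto_of_le_of_le hxt hyt (fun k => (hc1 k).1)
      (fun k => (hc1 k).2)
  have hcab : ∀ k, c k ∈ Set.Icc a b := fun k =>
    Set.Icc_subset_Icc (hx k).1 (hy k).2 (hc1 k)
  exact (tendsto_absderiv φ' a b hcont c hcab xbar hxbar hct).congr
    fun k => (hc2 k).symm

theorem local_adjustment_convergence (φ φ' : ℝ → ℝ) (a b : ℝ) (hab : a < b)
    (r : ℝ) (hr : 1 < r)
    (hderiv : ∀ x ∈ Set.Icc a b, HasDerivWithinAt φ (φ' x) (Set.Icc a b) x)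
    (hcont : ContinuousOn φ' (Set.Icc a b))
    (N : ℕ → ℕ) (P : ∀ k, Fin (N k + 2) → ℝ)
    (hmono : ∀ k, StrictMono (P k))
    (hfirst : ∀ k, P k 0 = a) (hlast : ∀ k, P k (Fin.last (N k + 1)) = b)
    (i : ℕ → ℕ) (hi0 : ∀ k, 0 < i k) (hiN : ∀ k, i k < N k)
    (xbar : ℝ) (hxbar : xbar ∈ Set.Icc a b)
    -- the chosen subinterval and its two neighbours shrink to the point `xbar`
    (hB : Tendsto (fun k => P k ⟨i k - 1, by have := hiN k; omega⟩) atTop (nhds xbar))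
    (hE : Tendsto (fun k => P k ⟨i k + 2, by have := hiN k; omega⟩) atTop (nhds xbar))
    -- the relative length `dᵢ/D` tends to 0
    (hdD : Tendsto (fun k =>
        dLen (P k) ⟨i k, by have := hiN k; omega⟩ / Dmax (P k)) atTop (nhds 0)) :
    Tendsto (fun k =>
        llocal φ r (P k) (i k) (hi0 k) (hiN k) -
          r * sSup ((fun x => |φ' x|) ''
            Set.Icc (P k ⟨i k, by have := hiN k; omega⟩)
              (P k ⟨i k + 1, by have := hiN k; omega⟩)))
      atTop (nhds 0) ∧
    ∀ k, 0 < sSup ((fun x => |φ' x|) ''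
          Set.Icc (P k ⟨i k, by have := hiN k; omega⟩)
            (P k ⟨i k + 1, by have := hiN k; omega⟩)) →
      sSup ((fun x => |φ' x|) ''
          Set.Icc (P k ⟨i k, by have := hiN k; omega⟩)
            (P k ⟨i k + 1, by have := hiN k; omega⟩)) <
        r * sSup ((fun x => |φ' x|) ''
          Set.Icc (P k ⟨i k, by have := hiN k; omega⟩)
            (P k ⟨i k + 1, by have := hiN k; omega⟩)) := by
  
  classical
  set S := sSup ((fun z => |φ' z|) '' Set.Icc a b) with hS
  have habs : ContinuousOn (fun z => |φ' z|) (Set.Icc a b) := hcont.abs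
  have hmem : ∀ k (j : Fin (N k + 2)), P k j ∈ Set.Icc a b := fun k j =>
    ⟨by rw [← hfirst k]; exact (hmono k).monotone (Fin.zero_le j),
     by rw [← hlast k]; exact (hmono k).monotone (Fin.le_last j)⟩
  -- the four relevant partition points
  set x0 : ℕ → ℝ := fun k => P k ⟨i k - 1, by have := hiN k; omega⟩ with hx0
  set x1 : ℕ → ℝ := fun k => P k ⟨i k, by have := hiN k; omega⟩ with hx1
  set x2 : ℕ → ℝ := fun k => P k ⟨i k + 1, by have := hiN k; omega⟩ with hx2
  set x3 : ℕ → ℝ := fun k => P k ⟨i k + 2, by have := hiN k; omega⟩ with hx3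
  have h01 : ∀ k, x0 k < x1 k := fun k =>
    hmono k (by simp [Fin.lt_def]; have := hi0 k; omega)
  have h12 : ∀ k, x1 k < x2 k := fun k => hmono k (by simp [Fin.lt_def])
  have h23 : ∀ k, x2 k < x3 k := fun k => hmono k (by simp [Fin.lt_def])
  have hm0 : ∀ k, x0 k ∈ Set.Icc a b := fun k => hmem k _
  have hm1 : ∀ k, x1 k ∈ Set.Icc a b := fun k => hmem k _
  have hm2 : ∀ k, x2 k ∈ Set.Icc a b := fun k => hmem k _
  have hm3 : ∀ k, x3 k ∈ Set.Icc a b := fun k => hmem k _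
  have hx1t : Tendsto x1 atTop (nhds xbar) :=
    tendsto_of_tendsto_of_tendsto_of_le_of_le hB hE (fun k => (h01 k).le)
      (fun k => ((h12 k).trans (h23 k)).le)
  have hx2t : Tendsto x2 atTop (nhds xbar) :=
    tendsto_of_tendsto_of_tendsto_of_le_of_le hB hE
      (fun k => ((h01 k).trans (h12 k)).le) (fun k => (h23 k).le)
  -- the three slopes as quotients
  have hs0 : ∀ k, slopeM φ (P k) ⟨i k - 1, by have := hiN k; omega⟩ =
      |φ (x1 k) - φ (x0 k)| / (x1 k - x0 k) := by
    intro k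
    have hv : ((⟨i k - 1, by have := hiN k; omega⟩ : Fin (N k + 1)).succ :
        Fin (N k + 2)) = ⟨i k, by have := hiN k; omega⟩ := by
      apply Fin.ext; simp [Fin.val_succ]; have := hi0 k; omega
    simp only [slopeM, hv, Fin.castSucc_mk]
    rfl
  have hs1 : ∀ k, slopeM φ (P k) ⟨i k, by have := hiN k; omega⟩ =
      |φ (x2 k) - φ (x1 k)| / (x2 k - x1 k) := fun k => rfl
  have hs2 : ∀ k, slopeM φ (P k) ⟨i k + 1, by have := hiN k; omega⟩ =
      |φ (x3 k) - φ (x2 k)| / (x3 k - x2 k) := fun k => rfl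
  have hm0t : Tendsto (fun k => slopeM φ (P k) ⟨i k - 1, by have := hiN k; omega⟩)
      atTop (nhds |φ' xbar|) :=
    (slope_tendsto φ φ' a b hderiv hcont x0 x1 h01 hm0 hm1 xbar hxbar hB hx1t).congr
      fun k => (hs0 k).symm
  have hm1t : Tendsto (fun k => slopeM φ (P k) ⟨i k, by have := hiN k; omega⟩)
      atTop (nhds |φ' xbar|) :=
    (slope_tendsto φ φ' a b hderiv hcont x1 x2 h12 hm1 hm2 xbar hxbar hx1t hx2t).congr
      fun k => (hs1 k).symm
  have hm2t : Tendsto (fun k => slopeM φ (P k) ⟨i k + 1, by have := hiN k; omega⟩)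
      atTop (nhds |φ' xbar|) :=
    (slope_tendsto φ φ' a b hderiv hcont x2 x3 h23 hm2 hm3 xbar hxbar hx2t hE).congr
      fun k => (hs2 k).symm
  -- bound on Mmax
  have hSb : ∀ z ∈ Set.Icc a b, |φ' z| ≤ S := fun z hz =>
    le_csSup (isCompact_Icc.image_of_continuousOn habs).bddAbove ⟨z, hz, rfl⟩
  have hMle : ∀ k, Mmax φ (P k) ≤ S := by
    intro k
    apply Finset.sup'_le
    intro j _
    have hlt : P k j.castSucc < P k j.succ := hmono k (Fin.castSucc_lt_succ (i := j))
    obtain ⟨c, hc, hce⟩ := mvt_abs φ φ' a b hderiv hlt (hmem k _) (hmem k _)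
    calc slopeM φ (P k) j = |φ' c| := hce
      _ ≤ S := hSb c (Set.Icc_subset_Icc (hmem k j.castSucc).1 (hmem k j.succ).2 hc)
  have hslope_nonneg : ∀ k (j : Fin (N k + 1)), 0 ≤ slopeM φ (P k) j := fun k j =>
    div_nonneg (abs_nonneg _) (sub_pos.2 (hmono k (Fin.castSucc_lt_succ (i := j)))).le
  have hM0 : ∀ k, 0 ≤ Mmax φ (P k) := fun k =>
    le_trans (hslope_nonneg k 0) (Finset.le_sup' _ (Finset.mem_univ (0 : Fin (N k + 1))))
  have hd : ∀ k, 0 < dLen (P k) ⟨i k, by have := hiN k; omega⟩ := fun k =>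
    sub_pos.2 (hmono k Fin.castSucc_lt_succ)
  have hD : ∀ k, 0 < Dmax (P k) := fun k =>
    lt_of_lt_of_le (hd k) (Finset.le_sup' _ (Finset.mem_univ _))
  set t : ℕ → ℝ := fun k =>
    Mmax φ (P k) * dLen (P k) ⟨i k, by have := hiN k; omega⟩ / Dmax (P k) with ht
  have htt : Tendsto t atTop (nhds 0) := by
    have hup : Tendsto (fun k =>
        S * (dLen (P k) ⟨i k, by have := hiN k; omega⟩ / Dmax (P k))) atTop
        (nhds 0) := by
      have := hdD.const_mul S
      simpa using this
    refine tendsto_of_tendsto_of_tendsto_of_le_of_le tendsto_const_nhds hup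
      (fun k => ?_) (fun k => ?_)
    · exact div_nonneg (mul_nonneg (hM0 k) (hd k).le) (hD k).le
    · show Mmax φ (P k) * dLen (P k) _ / Dmax (P k) ≤ _
      rw [mul_div_assoc]
      exact mul_le_mul_of_nonneg_right (hMle k) (div_nonneg (hd k).le (hD k).le)
  -- convergence of llocal
  have hlt : Tendsto (fun k => llocal φ r (P k) (i k) (hi0 k) (hiN k)) atTop
      (nhds (r * |φ' xbar|)) := by
    have hmaxt := ((hm0t.max hm1t).max (hm2t.max htt)).const_mul r
    simpa only [llocal, max_self, max_eq_left (abs_nonneg (φ' xbar))] using hmaxt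
  -- convergence of the sSup term
  have hst : Tendsto (fun k => r * sSup ((fun z => |φ' z|) ''
      Set.Icc (x1 k) (x2 k))) atTop (nhds (r * |φ' xbar|)) :=
    (ssup_tendsto φ' a b hcont x1 x2 h12 hm1 hm2 xbar hxbar hx1t hx2t).const_mul r
  constructor
  · have := hlt.sub hst
    simpa using this
  · intro k h
    exact (lt_mul_iff_one_lt_left h).2 hr
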